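/- Fix an integer n ≥ 1, an integer l with 0 ≤ l ≤ n−1, and reals λ ∈ (0,1], θ ∈ (0,1). With h = n, let q^{(n,n)}_0, …, q^{(n,n)}_{n−l−1} ∈ ℝ[j,k] be the coefficients of the quotient polynomial Q_{n,n,l}, and for 0 ≤ i ≤ n−l−1 let X_i denote the coefficient of the monomial j^i (i.e., j^i k^0) in q^{(n,n)}_i. Then X_0 = (λθ)^{n−1}(1−θ)^n, and for every 1 ≤ i ≤ n−l−1, X_i = α_i − Σ_{v=0}^{i−1} β_{i−v} X_v, where α_i = (−1)^i Σ_{i_1+i_2+i_3+i_4+i_5 = i} C(2,i_1)C(n,i_2)C(n,i_3)C(n,i_4)C(n,i_5) 2^{i_1} (λθ)^{n−1−i_3}(1−θ)^{n−i_4} θ^{−i_5} and β_a = (−1)^a Σ_{i_1+i_2+i_3 = a} C(1,i_1)C(n,i_2)C(2n+1,i_3) 2^{i_1+i_3} θ^{−i_2}. -/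

import Mathlib

open Polynomial

/-- Rising factorial in a commutative ring: `(a)_m = a (a+1) ⋯ (a+m−1)`, with `(a)_0 = 1`. -/
noncomputable def rfp {S : Type*} [CommRing S] (a : S) (m : ℕ) : S :=
  ∏ i ∈ Finset.range m, (a + (i : S))

/-- The base ring `R = ℝ[j,k]`. -/
abbrev R2 : Type := MvPolynomial (Fin 2) ℝ

/-- The variable `j` as a constant of `R[d]`. -/
noncomputable def Jv : Polynomial R2 := Polynomial.C (MvPolynomial.X 0)

/-- The variable `k` as a constant of `R[d]`. -/
noncomputable def Kv : Polynomial R2 := Polynomial.C (MvPolynomial.X 1)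

/-- Embedding of real scalars into `R[d]`. -/
noncomputable def cst (x : ℝ) : Polynomial R2 := Polynomial.C (MvPolynomial.C x)

/-- The dividend `P_{n,n}` (case `h = n`) in the polynomial long division. -/
noncomputable def Pnn (n : ℕ) (lam th : ℝ) : Polynomial R2 :=
  (X - 2 * Jv - 1) * (X + 2 * (n : Polynomial R2) - 2 * Jv - 1) * rfp (X - Jv) n *
    rfp (cst (1 - th) * X - Jv) n *
    rfp (cst (lam * th) * X - Jv + Kv) n *
    rfp (cst th * X - Jv + Kv) n

/-- The divisor `D_{n,n,l}` (case `h = n`) in the polynomial long division. -/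
noncomputable def Dnnl (n l : ℕ) (lam th : ℝ) : Polynomial R2 :=
  cst (lam * th) * X ^ (l + 1) * (X + (n : Polynomial R2) - 2 * Jv - 1) *
    rfp (cst th * X - Jv) n *
    rfp (X - 2 * Jv - 1 + Kv) (2 * n + 1)

/-- The quantity `α_i^{(n,λ,θ)}`. -/
noncomputable def alphaC (n : ℕ) (lam th : ℝ) (i : ℕ) : ℝ :=
  (-1 : ℝ) ^ i * ∑ x ∈ Finset.Nat.antidiagonalTuple 5 i,
    (Nat.choose 2 (x 0) : ℝ) * (n.choose (x 1) : ℝ) * (n.choose (x 2) : ℝ) *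
      (n.choose (x 3) : ℝ) * (n.choose (x 4) : ℝ) * 2 ^ (x 0) *
      (lam * th) ^ ((n : ℤ) - 1 - (x 2 : ℤ)) * (1 - th) ^ ((n : ℤ) - (x 3 : ℤ)) *
      th ^ (-(x 4 : ℤ))

/-- The quantity `β_a^{(n,θ)}`. -/
noncomputable def betaC (n : ℕ) (th : ℝ) (a : ℕ) : ℝ :=
  (-1 : ℝ) ^ a * ∑ x ∈ Finset.Nat.antidiagonalTuple 3 a,
    (Nat.choose 1 (x 0) : ℝ) * (n.choose (x 1) : ℝ) * ((2 * n + 1).choose (x 2) : ℝ) *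
      2 ^ (x 0 + x 2) * th ^ (-(x 1 : ℤ))


open Finset
section Aux

lemma coeff_lin_pow {S : Type*} [CommRing S] (a b : S) (m t : ℕ) :
    ((C a + C b * X : Polynomial S)^m).coeff t = (m.choose t : S) * a^(m-t) * b^t := by
  rcases le_or_gt t m with h | h
  · have : (C a + C b * X : Polynomial S) = C b * X + C a := by ring
    rw [this, add_pow]
    rw [finset_sum_coeff]
    rw [Finset.sum_eq_single t]
    · have : (C b * X : Polynomial S) ^ t * C a ^ (m - t) * (m.choose t : Polynomial S)
          = C (b ^ t * a ^ (m-t) * (m.choose t : S)) * X ^ t := by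
        rw [mul_pow, ← C_pow, ← C_pow, ← C_eq_natCast, C_mul, C_mul]
        ring
      rw [this, coeff_C_mul, coeff_X_pow, if_pos rfl]
      ring
    · intro k hk hkt
      have : (C b * X : Polynomial S) ^ k * C a ^ (m - k) * (m.choose k : Polynomial S)
          = C (b ^ k * a ^ (m-k) * (m.choose k : S)) * X ^ k := by
        rw [mul_pow, ← C_pow, ← C_pow, ← C_eq_natCast, C_mul, C_mul]
        ring
      rw [this, coeff_C_mul, coeff_X_pow, if_neg (Ne.symm hkt), mul_zero]
    · intro h'
      exact absurd (Finset.mem_range.mpr (Nat.lt_succ_of_le h)) h'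
  · rw [Nat.choose_eq_zero_of_lt h, Nat.cast_zero, zero_mul, zero_mul]
    apply coeff_eq_zero_of_natDegree_lt
    apply lt_of_le_of_lt _ h
    calc ((C a + C b * X : Polynomial S)^m).natDegree ≤ m * (C a + C b * X : Polynomial S).natDegree := natDegree_pow_le
    _ ≤ m * 1 := by
        apply Nat.mul_le_mul_left
        apply natDegree_add_le_of_degree_le
        · simp
        · exact (natDegree_C_mul_le _ _).trans natDegree_X_le
    _ = m := mul_one m

lemma sum_adT_succ {M : Type*} [AddCommMonoid M] (k n : ℕ) (f : (Fin (k+1) → ℕ) → M) :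
    ∑ t ∈ Finset.Nat.antidiagonalTuple (k+1) n, f t
      = ∑ p ∈ Finset.HasAntidiagonal.antidiagonal n, ∑ t ∈ Finset.Nat.antidiagonalTuple k p.2,
          f (Fin.cons p.1 t) := by
  rw [Finset.sum_sigma']
  refine Finset.sum_bij' (fun (x : Fin (k+1) → ℕ) _ => (⟨(x 0, ∑ i : Fin k, x i.succ), Fin.tail x⟩ :
      (_ : ℕ × ℕ) × (Fin k → ℕ)))
    (fun x _ => Fin.cons x.1.1 x.2) ?_ ?_ ?_ ?_ ?_
  · intro x hx
    simp only [Finset.Nat.mem_antidiagonalTuple] at hx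
    simp only [Finset.mem_sigma, Finset.HasAntidiagonal.mem_antidiagonal, Finset.Nat.mem_antidiagonalTuple]
    refine ⟨?_, rfl⟩
    rw [← hx, Fin.sum_univ_succ]
  · intro x hx
    simp only [Finset.mem_sigma, Finset.HasAntidiagonal.mem_antidiagonal, Finset.Nat.mem_antidiagonalTuple] at hx
    simp only [Finset.Nat.mem_antidiagonalTuple]
    rw [Fin.sum_univ_succ]
    simp only [Fin.cons_zero, Fin.cons_succ]
    rw [hx.2, hx.1]
  · intro x hx
    simp [Fin.cons_self_tail]
  · intro x hx
    simp only [Finset.mem_sigma, Finset.HasAntidiagonal.mem_antidiagonal, Finset.Nat.mem_antidiagonalTuple] at hx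
    apply Sigma.ext
    · simp only [Fin.cons_zero, Fin.cons_succ]
      rw [hx.2]
    · simp [Fin.tail_cons]
  · intro x hx
    exact congrArg f (Fin.cons_self_tail x).symm

lemma coeff_prod_tuple {S : Type*} [CommSemiring S] :
    ∀ (k : ℕ) (f : Fin k → Polynomial S) (n : ℕ),
    (∏ x, f x).coeff n = ∑ t ∈ Finset.Nat.antidiagonalTuple k n, ∏ x, (f x).coeff (t x)
  | 0, f, n => by
    cases n with
    | zero => simp
    | succ n => simp [coeff_one]
  | (k+1), f, n => by
    rw [Fin.prod_univ_succ, coeff_mul, sum_adT_succ]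
    apply Finset.sum_congr rfl
    intro p hp
    rw [coeff_prod_tuple k (fun x => f x.succ) p.2, Finset.mul_sum]
    apply Finset.sum_congr rfl
    intro t ht
    rw [Fin.prod_univ_succ]
    simp [Fin.cons_zero, Fin.cons_succ]
noncomputable section
abbrev A : Type := Polynomial ℝ
abbrev B : Type := Polynomial A

def phi : R2 →+* B :=
  MvPolynomial.eval₂Hom ((Polynomial.C : A →+* B).comp (Polynomial.C : ℝ →+* A))
    ![Polynomial.C X * X, 0]

def Psi : Polynomial R2 →+* B := Polynomial.eval₂RingHom phi X

lemma phi_coeff (a : R2) (i : ℕ) :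
    (phi a).coeff i = Polynomial.C (MvPolynomial.coeff (Finsupp.single 0 i) a) * X ^ i := by
  induction a using MvPolynomial.induction_on' with
  | monomial u c =>
    rw [phi, MvPolynomial.eval₂Hom_monomial]
    rw [Finsupp.prod_fintype _ _ (fun j => pow_zero _), Fin.prod_univ_two]
    simp only [Matrix.cons_val_zero, Matrix.cons_val_one, Matrix.head_cons]
    rw [MvPolynomial.coeff_monomial]
    rcases Nat.eq_zero_or_pos (u 1) with h1 | h1
    · rw [h1, pow_zero, mul_one, mul_pow, ← C_pow, RingHom.comp_apply]
      rw [show ((Polynomial.C (Polynomial.C c)) * (Polynomial.C (X ^ u 0) * X ^ u 0) : B)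
          = Polynomial.C (Polynomial.C c * X ^ u 0) * X ^ u 0 by rw [C_mul]; ring]
      rw [coeff_C_mul, coeff_X_pow]
      by_cases h : i = u 0
      · have hu : u = Finsupp.single 0 i := by
          ext x
          fin_cases x
          · simp [h, Finsupp.single_eq_same]
          · simpa using h1
        rw [if_pos h, if_pos hu, h, mul_one]
      · have hu : ¬ (u = Finsupp.single 0 i) := by
          intro hc
          exact h (by rw [hc]; simp [Finsupp.single_eq_same])
        rw [if_neg h, if_neg hu, mul_zero, map_zero, zero_mul]
    · rw [zero_pow (by omega : u 1 ≠ 0), mul_zero, mul_zero, coeff_zero]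
      have hu : ¬ (u = Finsupp.single 0 i) := by
        intro hc
        have : u 1 = 0 := by rw [hc]; simp [Finsupp.single_apply]
        omega
      rw [if_neg hu, map_zero, zero_mul]
  | add p q hp hq =>
    rw [map_add, coeff_add, hp, hq, MvPolynomial.coeff_add, C_add, add_mul]

lemma Psi_coeff_coeff (p : Polynomial R2) (N i : ℕ) (h : i ≤ N) :
    ((Psi p).coeff N).coeff i
      = MvPolynomial.coeff (Finsupp.single 0 i) (p.coeff (N - i)) := by
  induction p using Polynomial.induction_on' with
  | add p q hp hq => simp [hp, hq]
  | monomial t a =>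
    rw [Psi, coe_eval₂RingHom, Polynomial.eval₂_monomial, Polynomial.coeff_monomial]
    rw [coeff_mul_X_pow', phi_coeff]
    by_cases ht : t ≤ N
    · rw [if_pos ht, coeff_C_mul, coeff_X_pow]
      by_cases h2 : i = N - t
      · rw [if_pos h2, if_pos (by omega), h2, mul_one]
      · rw [if_neg h2, if_neg (by omega), MvPolynomial.coeff_zero, mul_zero]
    · rw [if_neg ht, if_neg (by omega), coeff_zero, MvPolynomial.coeff_zero]

lemma Psi_coeff_coeff_hi (p : Polynomial R2) (N i : ℕ) (h : N < i) :
    ((Psi p).coeff N).coeff i = 0 := by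
  induction p using Polynomial.induction_on' with
  | add p q hp hq => simp [hp, hq]
  | monomial t a =>
    rw [Psi, coe_eval₂RingHom, Polynomial.eval₂_monomial]
    rw [coeff_mul_X_pow', phi_coeff]
    by_cases ht : t ≤ N
    · rw [if_pos ht, coeff_C_mul, coeff_X_pow, if_neg (by omega), mul_zero]
    · rw [if_neg ht, coeff_zero]

def lin (c b : A) : B := Polynomial.C c * Polynomial.X + Polynomial.C b

lemma Psi_X : Psi Polynomial.X = Polynomial.X := Polynomial.eval₂_X _ _

lemma Psi_C (a : R2) : Psi (Polynomial.C a) = phi a := Polynomial.eval₂_C _ _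

lemma Psi_Jv : Psi Jv = Polynomial.C Polynomial.X * Polynomial.X := by
  rw [Jv, Psi_C, phi, MvPolynomial.eval₂Hom_X']
  rfl

lemma Psi_Kv : Psi Kv = 0 := by
  rw [Kv, Psi_C, phi, MvPolynomial.eval₂Hom_X']
  rfl

lemma Psi_cst (x : ℝ) : Psi (cst x) = Polynomial.C (Polynomial.C x) := by
  rw [cst, Psi_C, phi, MvPolynomial.eval₂Hom_C]
  rfl

lemma Psi_rfp (a : Polynomial R2) (m : ℕ) : Psi (rfp a m) = rfp (Psi a) m := by
  rw [rfp, rfp, map_prod]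
  exact Finset.prod_congr rfl fun i _ => by rw [map_add, map_natCast]

lemma rfp_lin (c b : A) (m : ℕ) :
    rfp (lin c b) m = ∏ i ∈ Finset.range m, lin c (b + i) := by
  rw [rfp]
  refine Finset.prod_congr rfl fun i _ => ?_
  rw [lin, lin, map_add, map_natCast]
  ring

lemma lin_ne_zero {c : A} (hc : c ≠ 0) (b : A) : lin c b ≠ 0 := fun h => by
  have : (lin c b).coeff 1 = c := by
    rw [lin, coeff_add, coeff_C_mul, coeff_X_one, coeff_C, if_neg one_ne_zero, mul_one, add_zero]
  rw [h, coeff_zero] at this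
  exact hc this.symm

lemma natDegree_lin {c : A} (hc : c ≠ 0) (b : A) : (lin c b).natDegree = 1 := by
  rw [lin]
  exact natDegree_linear hc

lemma leadingCoeff_lin {c : A} (hc : c ≠ 0) (b : A) : (lin c b).leadingCoeff = c := by
  rw [leadingCoeff, natDegree_lin hc, lin, coeff_add, coeff_C_mul, coeff_X_one, coeff_C,
    if_neg one_ne_zero, mul_one, add_zero]

lemma rfp_lin_ne_zero {c : A} (hc : c ≠ 0) (b : A) (m : ℕ) : rfp (lin c b) m ≠ 0 := by
  rw [rfp_lin]
  exact Finset.prod_ne_zero_iff.mpr fun i _ => lin_ne_zero hc _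

lemma natDegree_rfp_lin {c : A} (hc : c ≠ 0) (b : A) (m : ℕ) :
    (rfp (lin c b) m).natDegree = m := by
  rw [rfp_lin, natDegree_prod _ _ fun i _ => lin_ne_zero hc _]
  simp [natDegree_lin hc]

lemma leadingCoeff_rfp_lin {c : A} (hc : c ≠ 0) (b : A) (m : ℕ) :
    (rfp (lin c b) m).leadingCoeff = c ^ m := by
  rw [rfp_lin, leadingCoeff_prod]
  simp [leadingCoeff_lin hc]

lemma PsiP (n : ℕ) (lam th : ℝ) :
    Psi (Pnn n lam th)
      = lin (1 - 2*Polynomial.X) (-1) * lin (1 - 2*Polynomial.X) (2*(n:A) - 1)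
        * rfp (lin (1 - Polynomial.X) 0) n
        * rfp (lin (1 - Polynomial.C th - Polynomial.X) 0) n
        * rfp (lin (Polynomial.C lam * Polynomial.C th - Polynomial.X) 0) n
        * rfp (lin (Polynomial.C th - Polynomial.X) 0) n := by
  have e1 : (Polynomial.X - 2 * (Polynomial.C Polynomial.X * Polynomial.X) - 1 : B)
      = lin (1 - 2*Polynomial.X) (-1) := by
    simp only [lin, map_sub, map_mul, map_one, map_ofNat, map_neg]
    ring
  have e2 : (Polynomial.X + 2 * (n : B) - 2 * (Polynomial.C Polynomial.X * Polynomial.X) - 1 : B)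
      = lin (1 - 2*Polynomial.X) (2*(n:A) - 1) := by
    simp only [lin, map_sub, map_mul, map_one, map_ofNat, map_natCast]
    ring
  have e3 : (Polynomial.X - Polynomial.C Polynomial.X * Polynomial.X : B)
      = lin (1 - Polynomial.X) 0 := by
    simp only [lin, map_sub, map_one, map_zero]
    ring
  have e4 : ((1 - Polynomial.C (Polynomial.C th)) * Polynomial.X
        - Polynomial.C Polynomial.X * Polynomial.X : B)
      = lin (1 - Polynomial.C th - Polynomial.X) 0 := by
    simp only [lin, map_sub, map_zero, map_one, map_mul]
    ring
  have e5 : (Polynomial.C (Polynomial.C lam) * Polynomial.C (Polynomial.C th) * Polynomial.X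
        - Polynomial.C Polynomial.X * Polynomial.X + 0 : B)
      = lin (Polynomial.C lam * Polynomial.C th - Polynomial.X) 0 := by
    simp only [lin, map_sub, map_zero, map_one, map_mul]
    ring
  have e6 : (Polynomial.C (Polynomial.C th) * Polynomial.X
        - Polynomial.C Polynomial.X * Polynomial.X + 0 : B)
      = lin (Polynomial.C th - Polynomial.X) 0 := by
    simp only [lin, map_sub, map_zero, map_one, map_mul]
    ring
  rw [Pnn]
  simp only [map_mul, map_sub, map_add, map_one, map_natCast, map_ofNat, Psi_rfp, Psi_X,
    Psi_Jv, Psi_Kv, Psi_cst]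
  rw [e1, e2, e3, e4, e5, e6]

lemma PsiD (n l : ℕ) (lam th : ℝ) :
    Psi (Dnnl n l lam th)
      = Polynomial.C (Polynomial.C (lam*th)) * Polynomial.X^(l+1)
        * lin (1 - 2*Polynomial.X) ((n:A) - 1)
        * rfp (lin (Polynomial.C th - Polynomial.X) 0) n
        * rfp (lin (1 - 2*Polynomial.X) (-1)) (2*n+1) := by
  have e2 : (Polynomial.X + (n : B) - 2 * (Polynomial.C Polynomial.X * Polynomial.X) - 1 : B)
      = lin (1 - 2*Polynomial.X) ((n:A) - 1) := by
    simp only [lin, map_sub, map_mul, map_one, map_ofNat, map_natCast]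
    ring
  have e6 : (Polynomial.C (Polynomial.C th) * Polynomial.X
        - Polynomial.C Polynomial.X * Polynomial.X : B)
      = lin (Polynomial.C th - Polynomial.X) 0 := by
    simp only [lin, map_sub, map_zero, map_one, map_mul]
    ring
  have e1 : (Polynomial.X - 2 * (Polynomial.C Polynomial.X * Polynomial.X) - 1 + 0 : B)
      = lin (1 - 2*Polynomial.X) (-1) := by
    simp only [lin, map_sub, map_mul, map_one, map_ofNat, map_neg]
    ring
  rw [Dnnl]
  simp only [map_mul, map_sub, map_add, map_one, map_natCast, map_ofNat, map_pow, Psi_rfp,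
    Psi_X, Psi_Jv, Psi_Kv, Psi_cst]
  rw [e2, e6, e1]

lemma nzA1 : (1 - 2*Polynomial.X : A) ≠ 0 := fun h => by
  have := congrArg (fun p : A => p.coeff 1) h; simp [Polynomial.coeff_one] at this
lemma nzA2 : (1 - Polynomial.X : A) ≠ 0 := fun h => by
  have := congrArg (fun p : A => p.coeff 1) h; simp [Polynomial.coeff_one] at this
lemma nzA3 (x : ℝ) : (Polynomial.C x - Polynomial.X : A) ≠ 0 := fun h => by
  have := congrArg (fun p : A => p.coeff 1) h; simp [Polynomial.coeff_one] at this
lemma nzA4 (x : ℝ) : (1 - Polynomial.C x - Polynomial.X : A) ≠ 0 := fun h => by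
  have := congrArg (fun p : A => p.coeff 1) h; simp [Polynomial.coeff_one] at this
lemma nzA5 (x y : ℝ) : (Polynomial.C x * Polynomial.C y - Polynomial.X : A) ≠ 0 := fun h => by
  have := congrArg (fun p : A => p.coeff 1) h; simp [Polynomial.coeff_one] at this

noncomputable def Pt (n : ℕ) (lam th : ℝ) : A :=
  (1 - 2*Polynomial.X) * (1 - 2*Polynomial.X) * (1 - Polynomial.X)^n
    * (1 - Polynomial.C th - Polynomial.X)^n * (Polynomial.C lam * Polynomial.C th - Polynomial.X)^n
    * (Polynomial.C th - Polynomial.X)^n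

noncomputable def Dt (n : ℕ) (lam th : ℝ) : A :=
  Polynomial.C (lam*th) * (1 - 2*Polynomial.X) * (Polynomial.C th - Polynomial.X)^n
    * (1 - 2*Polynomial.X)^(2*n+1)

lemma PsiP_ne (n : ℕ) (lam th : ℝ) : Psi (Pnn n lam th) ≠ 0 := by
  rw [PsiP]
  exact mul_ne_zero (mul_ne_zero (mul_ne_zero (mul_ne_zero (mul_ne_zero
    (lin_ne_zero nzA1 _) (lin_ne_zero nzA1 _)) (rfp_lin_ne_zero nzA2 _ _))
    (rfp_lin_ne_zero (nzA4 th) _ _)) (rfp_lin_ne_zero (nzA5 lam th) _ _))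
    (rfp_lin_ne_zero (nzA3 th) _ _)

lemma PsiP_natDegree (n : ℕ) (lam th : ℝ) : (Psi (Pnn n lam th)).natDegree = 4*n+2 := by
  rw [PsiP]
  rw [natDegree_mul (mul_ne_zero (mul_ne_zero (mul_ne_zero (mul_ne_zero
      (lin_ne_zero nzA1 _) (lin_ne_zero nzA1 _)) (rfp_lin_ne_zero nzA2 _ _))
      (rfp_lin_ne_zero (nzA4 th) _ _)) (rfp_lin_ne_zero (nzA5 lam th) _ _))
      (rfp_lin_ne_zero (nzA3 th) _ _),
    natDegree_mul (mul_ne_zero (mul_ne_zero (mul_ne_zero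
      (lin_ne_zero nzA1 _) (lin_ne_zero nzA1 _)) (rfp_lin_ne_zero nzA2 _ _))
      (rfp_lin_ne_zero (nzA4 th) _ _)) (rfp_lin_ne_zero (nzA5 lam th) _ _),
    natDegree_mul (mul_ne_zero (mul_ne_zero
      (lin_ne_zero nzA1 _) (lin_ne_zero nzA1 _)) (rfp_lin_ne_zero nzA2 _ _))
      (rfp_lin_ne_zero (nzA4 th) _ _),
    natDegree_mul (mul_ne_zero (lin_ne_zero nzA1 _) (lin_ne_zero nzA1 _))
      (rfp_lin_ne_zero nzA2 _ _),
    natDegree_mul (lin_ne_zero nzA1 _) (lin_ne_zero nzA1 _)]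
  rw [natDegree_lin nzA1, natDegree_lin nzA1, natDegree_rfp_lin nzA2,
    natDegree_rfp_lin (nzA4 th), natDegree_rfp_lin (nzA5 lam th), natDegree_rfp_lin (nzA3 th)]
  ring

lemma PsiP_leadingCoeff (n : ℕ) (lam th : ℝ) :
    (Psi (Pnn n lam th)).leadingCoeff = Pt n lam th := by
  rw [PsiP, Pt]
  rw [leadingCoeff_mul, leadingCoeff_mul, leadingCoeff_mul, leadingCoeff_mul, leadingCoeff_mul]
  rw [leadingCoeff_lin nzA1, leadingCoeff_lin nzA1, leadingCoeff_rfp_lin nzA2,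
    leadingCoeff_rfp_lin (nzA4 th), leadingCoeff_rfp_lin (nzA5 lam th),
    leadingCoeff_rfp_lin (nzA3 th)]

lemma PsiD_natDegree (n l : ℕ) (lam th : ℝ) (h : lam * th ≠ 0) :
    (Psi (Dnnl n l lam th)).natDegree = 3*n+l+3 := by
  rw [PsiD]
  have hC : (Polynomial.C (Polynomial.C (lam*th)) : B) ≠ 0 := by
    simp only [ne_eq, Polynomial.C_eq_zero]
    exact h
  have hX : (Polynomial.X ^ (l+1) : B) ≠ 0 := pow_ne_zero _ Polynomial.X_ne_zero
  rw [natDegree_mul (mul_ne_zero (mul_ne_zero (mul_ne_zero hC hX)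
      (lin_ne_zero nzA1 _)) (rfp_lin_ne_zero (nzA3 th) _ _)) (rfp_lin_ne_zero nzA1 _ _),
    natDegree_mul (mul_ne_zero (mul_ne_zero hC hX) (lin_ne_zero nzA1 _))
      (rfp_lin_ne_zero (nzA3 th) _ _),
    natDegree_mul (mul_ne_zero hC hX) (lin_ne_zero nzA1 _),
    natDegree_mul hC hX]
  rw [natDegree_C, natDegree_X_pow, natDegree_lin nzA1, natDegree_rfp_lin (nzA3 th),
    natDegree_rfp_lin nzA1]
  ring

lemma PsiD_leadingCoeff (n l : ℕ) (lam th : ℝ) :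
    (Psi (Dnnl n l lam th)).leadingCoeff = Dt n lam th := by
  rw [PsiD, Dt]
  rw [leadingCoeff_mul, leadingCoeff_mul, leadingCoeff_mul, leadingCoeff_mul]
  rw [leadingCoeff_lin nzA1, leadingCoeff_rfp_lin (nzA3 th), leadingCoeff_rfp_lin nzA1]
  rw [leadingCoeff_C, leadingCoeff_X_pow]
  ring

lemma Dt_coeff_zero (n : ℕ) (lam th : ℝ) : (Dt n lam th).coeff 0 = lam * th^(n+1) := by
  rw [Polynomial.coeff_zero_eq_eval_zero, Dt]
  simp only [eval_mul, eval_pow, eval_sub, eval_one, eval_C, eval_X, eval_ofNat, mul_zero,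
    sub_zero]
  ring

lemma key (n l : ℕ) (hl : l + 1 ≤ n) (lam th : ℝ) (hlt : lam * th ≠ 0)
    (Q Rem : Polynomial R2) (hdiv : Pnn n lam th = Dnnl n l lam th * Q + Rem)
    (hRem : Rem.degree < ((3 * n + l + 3 : ℕ) : WithBot ℕ)) :
    ∀ i ≤ n - l - 1, (Pt n lam th).coeff i
      = ∑ v ∈ Finset.range (i+1),
          (Dt n lam th).coeff (i - v) * ((Psi Q).coeff (n - l - 1)).coeff v := by
  have hdiv' : Psi (Pnn n lam th) = Psi (Dnnl n l lam th) * Psi Q + Psi Rem := by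
    rw [hdiv, map_add, map_mul]
  have hRemc : ∀ m, 3*n+l+3 ≤ m → Rem.coeff m = 0 := by
    intro m hm
    refine Polynomial.coeff_eq_zero_of_degree_lt (lt_of_lt_of_le hRem ?_)
    exact_mod_cast Nat.cast_le.mpr hm
  have hR' : ∀ N i : ℕ, i ≤ N → 3*n+l+3 + i ≤ N → ((Psi Rem).coeff N).coeff i = 0 := by
    intro N i hi hNi
    rw [Psi_coeff_coeff _ _ _ hi, hRemc _ (by omega), MvPolynomial.coeff_zero]
  have hDdeg := PsiD_natDegree n l lam th hlt
  have hDlc : (Psi (Dnnl n l lam th)).coeff (3*n+l+3) = Dt n lam th := by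
    rw [← hDdeg, Polynomial.coeff_natDegree, PsiD_leadingCoeff]
  -- degree bound on Psi Q
  have hQdeg : (Psi Q).natDegree ≤ n - l - 1 := by
    by_cases hQ0 : Psi Q = 0
    · rw [hQ0, natDegree_zero]; omega
    by_contra hcon
    push_neg at hcon
    set t := (Psi Q).natDegree with htdef
    set Qt := (Psi Q).coeff t with hQtdef
    have hQtne : Qt ≠ 0 := by
      rw [hQtdef, Polynomial.coeff_natDegree]
      exact leadingCoeff_ne_zero.mpr hQ0
    have hQtd : Qt.natDegree ≤ t := by
      apply Polynomial.natDegree_le_iff_coeff_eq_zero.mpr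
      intro m hm
      exact Psi_coeff_coeff_hi _ _ _ hm
    set e := Qt.natTrailingDegree with hedef
    have he : e ≤ t := le_trans Qt.natTrailingDegree_le_natDegree hQtd
    have h1 : ((Psi (Dnnl n l lam th)) * Psi Q).coeff (3*n+l+3 + t)
        = Dt n lam th * Qt := by
      rw [Polynomial.coeff_mul_add_eq_of_natDegree_le (le_of_eq hDdeg) (le_refl t), hDlc]
    have h2 : (Psi (Pnn n lam th)).coeff (3*n+l+3 + t) = 0 := by
      apply Polynomial.coeff_eq_zero_of_natDegree_lt
      rw [PsiP_natDegree]
      omega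
    have h3 : Dt n lam th * Qt = -((Psi Rem).coeff (3*n+l+3 + t)) := by
      have := congrArg (fun p : B => p.coeff (3*n+l+3+t)) hdiv'
      simp only [coeff_add] at this
      rw [h2, h1] at this
      exact eq_neg_of_add_eq_zero_left this.symm
    have h4 : (Dt n lam th * Qt).coeff e = (lam * th^(n+1)) * Qt.coeff e := by
      rw [Polynomial.coeff_mul]
      rw [Finset.sum_eq_single (0, e)]
      · rw [Dt_coeff_zero]
      · intro p hp hpe
        rcases Nat.lt_or_ge p.2 e with h | h
        · rw [Polynomial.coeff_eq_zero_of_lt_natTrailingDegree h, mul_zero]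
        · have hmem := Finset.HasAntidiagonal.mem_antidiagonal.mp hp
          exfalso
          apply hpe
          have : p.2 = e := by omega
          have : p.1 = 0 := by omega
          ext <;> simp [this, ‹p.2 = e›]
      · intro hne
        exact absurd (Finset.HasAntidiagonal.mem_antidiagonal.mpr (by omega)) hne
    have h5 : ((Psi Rem).coeff (3*n+l+3 + t)).coeff e = 0 :=
      hR' _ _ (by omega) (by omega)
    have hlam0 : lam ≠ 0 := fun h => hlt (by rw [h, zero_mul])
    have hth0 : th ≠ 0 := fun h => hlt (by rw [h, mul_zero])
    have h6 : (lam * th^(n+1)) * Qt.coeff e ≠ 0 := by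
      apply mul_ne_zero (mul_ne_zero hlam0 (pow_ne_zero _ hth0))
      exact mt Polynomial.trailingCoeff_eq_zero.mp hQtne
    apply h6
    rw [← h4, h3, Polynomial.coeff_neg, h5, neg_zero]
  -- main identity
  have hsum : 3*n+l+3 + (n-l-1) = 4*n+2 := by omega
  have hPc : (Psi (Pnn n lam th)).coeff (4*n+2) = Pt n lam th := by
    rw [← PsiP_natDegree n lam th, Polynomial.coeff_natDegree, PsiP_leadingCoeff]
  have hDQ : ((Psi (Dnnl n l lam th)) * Psi Q).coeff (4*n+2)
      = Dt n lam th * (Psi Q).coeff (n-l-1) := by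
    rw [← hsum, Polynomial.coeff_mul_add_eq_of_natDegree_le (le_of_eq hDdeg) hQdeg, hDlc]
  intro i hi
  have hmain : Pt n lam th = Dt n lam th * (Psi Q).coeff (n-l-1) + (Psi Rem).coeff (4*n+2) := by
    have := congrArg (fun p : B => p.coeff (4*n+2)) hdiv'
    simp only [coeff_add] at this
    rw [hPc, hDQ] at this
    exact this
  have := congrArg (fun p : A => p.coeff i) hmain
  simp only [coeff_add] at this
  rw [hR' _ _ (by omega) (by omega), add_zero] at this
  rw [this, Polynomial.coeff_mul, Finset.Nat.sum_antidiagonal_eq_sum_range_succ_mk]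
  rw [← Finset.sum_range_reflect]
  apply Finset.sum_congr rfl
  intro v hv
  have hvle : v ≤ i := by
    have := Finset.mem_range.mp hv; omega
  rw [show i + 1 - 1 - v = i - v from by omega, show i - (i - v) = v from by omega]

set_option maxHeartbeats 800000 in
lemma Pt_coeff (n : ℕ) (lam th : ℝ) (hth : th ≠ 0) (i : ℕ) (hi : i ≤ n - 1) (hn : 1 ≤ n) :
    (Pt n lam th).coeff i = lam * th^(n+1) * alphaC n lam th i := by
  have hPt : Pt n lam th
      = ∏ x : Fin 5, (![(Polynomial.C 1 + Polynomial.C (-2:ℝ) * Polynomial.X)^2,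
          (Polynomial.C 1 + Polynomial.C (-1:ℝ) * Polynomial.X)^n,
          (Polynomial.C (lam*th) + Polynomial.C (-1:ℝ) * Polynomial.X)^n,
          (Polynomial.C (1-th) + Polynomial.C (-1:ℝ) * Polynomial.X)^n,
          (Polynomial.C th + Polynomial.C (-1:ℝ) * Polynomial.X)^n] x) := by
    rw [Pt, Fin.prod_univ_five]
    simp only [Matrix.cons_val_zero, Matrix.cons_val_one, Matrix.head_cons,
      Matrix.cons_val_two, Matrix.tail_cons, Matrix.cons_val_three, Matrix.cons_val_four,
      Matrix.cons_val_succ]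
    simp only [map_one, map_neg, map_ofNat, map_sub, map_mul]
    ring
  rw [hPt, coeff_prod_tuple]
  simp only [alphaC, Finset.mul_sum]
  apply Finset.sum_congr rfl
  intro x hx
  have hsum : x 0 + x 1 + x 2 + x 3 + x 4 = i := by
    have := Finset.Nat.mem_antidiagonalTuple.mp hx
    rw [Fin.sum_univ_five] at this
    exact this
  rw [Fin.prod_univ_five]
  simp only [Matrix.cons_val_zero, Matrix.cons_val_one, Matrix.head_cons,
    Matrix.cons_val_two, Matrix.tail_cons, Matrix.cons_val_three, Matrix.cons_val_four,
    Matrix.cons_val_succ]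
  rw [coeff_lin_pow, coeff_lin_pow, coeff_lin_pow, coeff_lin_pow, coeff_lin_pow]
  have z2 : (lam*th)^((n:ℤ) - 1 - (x 2 : ℤ)) = (lam*th)^(n - 1 - x 2) := by
    rw [show (n:ℤ) - 1 - (x 2:ℤ) = ((n - 1 - x 2 : ℕ) : ℤ) from by omega, zpow_natCast]
  have z3 : (1-th)^((n:ℤ) - (x 3 : ℤ)) = (1-th)^(n - x 3) := by
    rw [show (n:ℤ) - (x 3:ℤ) = ((n - x 3 : ℕ) : ℤ) from by omega, zpow_natCast]
  have z4 : th^(-(x 4 : ℤ)) = (th^(x 4))⁻¹ := by rw [zpow_neg, zpow_natCast]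
  rw [z2, z3, z4]
  have hm1 : ((-1:ℝ))^i = (-1)^(x 0) * (-1)^(x 1) * (-1)^(x 2) * (-1)^(x 3) * (-1)^(x 4) := by
    rw [← hsum, pow_add, pow_add, pow_add, pow_add]
  have hm2 : ((-2:ℝ))^(x 0) = (-1)^(x 0) * 2^(x 0) := by
    rw [← mul_pow]; norm_num
  rw [hm1, hm2]
  have hc2 : n - x 2 = (n - 1 - x 2) + 1 := by omega
  have hc4 : n + 1 = (n - x 4) + x 4 + 1 := by omega
  rw [hc2, hc4, pow_succ, pow_add, pow_succ]
  have hy : th ^ (x 4) ≠ 0 := pow_ne_zero _ hth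
  simp only [one_pow]
  field_simp
  ring

lemma Dt_coeff (n : ℕ) (lam th : ℝ) (hth : th ≠ 0) (a : ℕ) (ha : a ≤ n) :
    (Dt n lam th).coeff a = lam * th^(n+1) * betaC n th a := by
  have hDt : Dt n lam th
      = Polynomial.C (lam*th) * ∏ x : Fin 3, (![(Polynomial.C 1 + Polynomial.C (-2:ℝ) * Polynomial.X)^1,
          (Polynomial.C th + Polynomial.C (-1:ℝ) * Polynomial.X)^n,
          (Polynomial.C 1 + Polynomial.C (-2:ℝ) * Polynomial.X)^(2*n+1)] x) := by
    rw [Dt, Fin.prod_univ_three]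
    simp only [Matrix.cons_val_zero, Matrix.cons_val_one, Matrix.head_cons,
      Matrix.cons_val_two, Matrix.tail_cons, Matrix.cons_val_succ]
    simp only [map_one, map_neg, map_ofNat, map_sub, map_mul]
    ring
  rw [hDt, Polynomial.coeff_C_mul, coeff_prod_tuple]
  simp only [betaC, Finset.mul_sum]
  apply Finset.sum_congr rfl
  intro x hx
  have hsum : x 0 + x 1 + x 2 = a := by
    have := Finset.Nat.mem_antidiagonalTuple.mp hx
    rw [Fin.sum_univ_three] at this
    exact this
  rw [Fin.prod_univ_three]
  simp only [Matrix.cons_val_zero, Matrix.cons_val_one, Matrix.head_cons,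
    Matrix.cons_val_two, Matrix.tail_cons, Matrix.cons_val_succ]
  rw [coeff_lin_pow, coeff_lin_pow, coeff_lin_pow]
  have z1 : th^(-(x 1 : ℤ)) = (th^(x 1))⁻¹ := by rw [zpow_neg, zpow_natCast]
  rw [z1]
  have hm1 : ((-1:ℝ))^a = (-1)^(x 0) * (-1)^(x 1) * (-1)^(x 2) := by
    rw [← hsum, pow_add, pow_add]
  have hm2 : ∀ m : ℕ, ((-2:ℝ))^m = (-1)^m * 2^m := by
    intro m; rw [← mul_pow]; norm_num
  rw [hm1, hm2, hm2, pow_add (2:ℝ)]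
  have hc1 : n + 1 = (n - x 1) + x 1 + 1 := by omega
  rw [hc1, pow_add, pow_succ]
  have hy : th ^ (x 1) ≠ 0 := pow_ne_zero _ hth
  simp only [one_pow]
  field_simp
  ring

end
end Aux

/-- Recurrence for `X_i`, the coefficient of `j^i` in `q^{(n,n)}_i` (case `h = n`):
`X_0 = (λθ)^{n−1}(1−θ)^n` and `X_i = α_i − ∑_{v=0}^{i−1} β_{i−v} X_v` for `1 ≤ i ≤ n−l−1`. -/
theorem stmt_10 (n l : ℕ) (hn : 1 ≤ n) (hl : l ≤ n - 1)
    (lam th : ℝ) (hlam0 : 0 < lam) (hlam1 : lam ≤ 1) (hth0 : 0 < th) (hth1 : th < 1)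
    (Q Rem : Polynomial R2)
    (hdiv : Pnn n lam th = Dnnl n l lam th * Q + Rem)
    (hRem : Rem.degree < ((3 * n + l + 3 : ℕ) : WithBot ℕ)) :
    MvPolynomial.coeff (Finsupp.single 0 0) (Q.coeff (n - l - 1))
      = (lam * th) ^ (n - 1) * (1 - th) ^ n ∧
    ∀ i : ℕ, 1 ≤ i → i ≤ n - l - 1 →
      MvPolynomial.coeff (Finsupp.single (0 : Fin 2) i) (Q.coeff (n - l - 1 - i))
        = alphaC n lam th i -
          ∑ v ∈ Finset.range i,
            betaC n th (i - v) *
              MvPolynomial.coeff (Finsupp.single (0 : Fin 2) v) (Q.coeff (n - l - 1 - v)) := by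
  have hl' : l + 1 ≤ n := by omega
  have hth : th ≠ 0 := ne_of_gt hth0
  have hlam : lam ≠ 0 := ne_of_gt hlam0
  have hlt : lam * th ≠ 0 := mul_ne_zero hlam hth
  have hC : lam * th^(n+1) ≠ 0 := mul_ne_zero hlam (pow_ne_zero _ hth)
  have hK := key n l hl' lam th hlt Q Rem hdiv hRem
  constructor
  · -- X_0
    have h0 := Psi_coeff_coeff Q (n-l-1) 0 (Nat.zero_le _)
    rw [Nat.sub_zero] at h0
    rw [← h0]
    have hk0 := hK 0 (Nat.zero_le _)
    rw [Finset.sum_range_one, Nat.sub_zero, Dt_coeff_zero] at hk0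
    have hP0 : (Pt n lam th).coeff 0 = (1-th)^n * (lam*th)^n * th^n := by
      rw [Polynomial.coeff_zero_eq_eval_zero, Pt]
      simp only [eval_mul, eval_pow, eval_sub, eval_one, eval_C, eval_X, eval_ofNat,
        mul_zero, sub_zero]
      ring
    rw [hP0] at hk0
    apply mul_left_cancel₀ hC
    rw [← hk0]
    rw [show (lam*th)^n = (lam*th)^(n-1) * (lam*th) from by rw [← pow_succ]; congr 1; omega,
      pow_succ th n]
    ring
  · -- recurrence
    intro i hi1 hi2
    have hbridge : ∀ v, v ≤ n - l - 1 →
        MvPolynomial.coeff (Finsupp.single (0 : Fin 2) v) (Q.coeff (n-l-1-v))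
          = ((Psi Q).coeff (n-l-1)).coeff v :=
      fun v hv => (Psi_coeff_coeff Q (n-l-1) v hv).symm
    rw [hbridge i hi2]
    have hgs : ∑ v ∈ Finset.range i,
          betaC n th (i - v) *
            MvPolynomial.coeff (Finsupp.single (0 : Fin 2) v) (Q.coeff (n - l - 1 - v))
        = ∑ v ∈ Finset.range i, betaC n th (i - v) * ((Psi Q).coeff (n-l-1)).coeff v := by
      refine Finset.sum_congr rfl fun v hv => ?_
      rw [hbridge v (by have := Finset.mem_range.mp hv; omega)]
    rw [hgs]
    have hki := hK i hi2
    rw [Pt_coeff n lam th hth i (by omega) hn, Finset.sum_range_succ, Nat.sub_self,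
      Dt_coeff_zero] at hki
    have hs : ∑ v ∈ Finset.range i, (Dt n lam th).coeff (i-v) * ((Psi Q).coeff (n-l-1)).coeff v
        = ∑ v ∈ Finset.range i,
            lam*th^(n+1) * (betaC n th (i-v) * ((Psi Q).coeff (n-l-1)).coeff v) := by
      refine Finset.sum_congr rfl fun v hv => ?_
      rw [Dt_coeff n lam th hth (i-v) (by omega), mul_assoc]
    rw [hs, ← Finset.mul_sum, ← mul_add] at hki
    have hfin := mul_left_cancel₀ hC hki
    linarith [hfin]
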